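/- Let p, q, λ, θ, κ be real numbers with pq ≠ 0, λ ≠ 1, κ > 0, and assume the following triparametric Stam-type inequality holds: for every almost-everywhere differentiable probability density function h with finite φ_{p,q}[h] and N_λ[h], one has (φ_{p,q}[h] · N_λ[h])^{θ} ≥ κ. Let β ≠ 0, α ≠ 2β, and let f be a probability density function, positive and continuous on (x_i, x_f) with base point x₀, whose biparametric up transform g = 𝔘_{α,β}[f] is well defined and almost everywhere differentiable. Then ( A^{1/(1−λ)} · φ_{p,q}[g] )^{θ} ≥ |β/(α−2β)|^{βθ/(α−2β)} · κ, where A = ∫ |∫_{x₀}^x f(t)^{(β−1)/β} dt|^{β(λ−1)/(2β−α)} f(x) dx, whenever all quantities involved are finite. -/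

import Mathlib

open MeasureTheory Set Filter Topology

noncomputable section

/-- The open interval with extended-real endpoints, viewed as a set of reals. -/
def intIoo (a b : EReal) : Set ℝ := {x : ℝ | a < (x : EReal) ∧ (x : EReal) < b}

lemma intIoo_isOpen (a b : EReal) : IsOpen (intIoo a b) := by
  have h : intIoo a b = ((↑) : ℝ → EReal) ⁻¹' (Set.Ioo a b) := rfl
  rw [h]
  exact isOpen_Ioo.preimage continuous_coe_real_ereal

/-- transferring a triparametric Stam-type inequality
`(φ_{p,q}[h] N_λ[h])^θ ≥ κ` to the biparametric up transform `g = 𝔘_{α,β}[f]`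
yields `(A^{1/(1-λ)} φ_{p,q}[g])^θ ≥ |β/(α-2β)|^{βθ/(α-2β)} κ`. -/
theorem stam_inequality_transferred_to_biparametric_up_transform
    (p q lam θ κ : ℝ)
    (hp : p ≠ 0) (hq : q ≠ 0) (hlam : lam ≠ 1) (hκ : 0 < κ)
    (hStam : ∀ h h' : ℝ → ℝ, Measurable h → (∀ x, 0 ≤ h x) → (∫ x, h x) = 1 →
      (∀ᵐ x ∂(volume : Measure ℝ), HasDerivAt h (h' x) x) →
      Integrable (fun x => |h x ^ (q - 2) * h' x| ^ p * h x) →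
      Integrable (fun x => h x ^ lam) →
      ((∫ x, |h x ^ (q - 2) * h' x| ^ p * h x) ^ ((1 : ℝ) / (p * q))
        * (∫ x, h x ^ lam) ^ ((1 : ℝ) / (1 - lam))) ^ θ ≥ κ)
    (α β : ℝ) (hβ : β ≠ 0) (hαβ : α ≠ 2 * β)
    (xi xf : EReal) (hif : xi < xf)
    (x₀ : ℝ) (hx₀l : xi ≤ (x₀ : EReal)) (hx₀r : (x₀ : EReal) ≤ xf)
    (f Y u g g' : ℝ → ℝ)
    (hf_meas : Measurable f)
    (hf_nonneg : ∀ x, 0 ≤ f x)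
    (hf_supp : ∀ x ∉ intIoo xi xf, f x = 0)
    (hf_int : (∫ x, f x) = 1)
    (hf_pos : ∀ x ∈ intIoo xi xf, 0 < f x)
    (hf_cont : ContinuousOn f (intIoo xi xf))
    (hY : ∀ x, Y x = ∫ t in x₀..x, f t ^ ((β - 1) / β))
    (hu_fin : ∀ x ∈ intIoo xi xf,
      IntegrableOn (fun r => |((α - 2 * β) / β) * Y r| ^ (β / (α - 2 * β)) * f r)
        (intIoo (x : EReal) xf))
    (hu : ∀ x ∈ intIoo xi xf,
      u x = ∫ r in intIoo (x : EReal) xf,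
        |((α - 2 * β) / β) * Y r| ^ (β / (α - 2 * β)) * f r)
    (hu_anti : StrictAntiOn u (intIoo xi xf))
    (hg : ∀ x ∈ intIoo xi xf,
      g (u x) = |((α - 2 * β) / β) * Y x| ^ (β / (2 * β - α)))
    (hg_supp : ∀ v ∉ u '' intIoo xi xf, g v = 0)
    (hg_meas : Measurable g)
    (hg_nonneg : ∀ v, 0 ≤ g v)
    (hg_int : (∫ v, g v) = 1)
    (hg' : ∀ᵐ v ∂(volume : Measure ℝ), HasDerivAt g (g' v) v)
    (hfin1 : Integrable (fun v => |g v ^ (q - 2) * g' v| ^ p * g v))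
    (hfin2 : Integrable (fun v => g v ^ lam))
    (hfin3 : IntegrableOn
      (fun x => |∫ t in x₀..x, f t ^ ((β - 1) / β)| ^ (β * (lam - 1) / (2 * β - α)) * f x)
      (intIoo xi xf)) :
    ((∫ x in intIoo xi xf,
        |∫ t in x₀..x, f t ^ ((β - 1) / β)| ^ (β * (lam - 1) / (2 * β - α)) * f x)
        ^ ((1 : ℝ) / (1 - lam))
      * (∫ v, |g v ^ (q - 2) * g' v| ^ p * g v) ^ ((1 : ℝ) / (p * q))) ^ θ
    ≥ |β / (α - 2 * β)| ^ (β * θ / (α - 2 * β)) * κ := by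
  have habs : α - 2 * β ≠ 0 := sub_ne_zero.mpr hαβ
  have habs' : 2 * β - α ≠ 0 := by intro h; apply habs; linarith
  have hlam1 : (1 : ℝ) - lam ≠ 0 := sub_ne_zero.mpr (Ne.symm hlam)
  set c : ℝ := (α - 2 * β) / β with hcdef
  have hc : c ≠ 0 := div_ne_zero habs hβ
  set e : ℝ := β / (α - 2 * β) with hedef
  have he : e ≠ 0 := div_ne_zero hβ habs
  set E : ℝ := β * (lam - 1) / (2 * β - α) with hEdef
  set I : Set ℝ := intIoo xi xf with hIdef
  set φ : ℝ → ℝ := fun t => f t ^ ((β - 1) / β) with hφdef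
  set w : ℝ → ℝ := fun r => |c * Y r| ^ e * f r with hwdef
  have hIopen : IsOpen I := intIoo_isOpen xi xf
  have hImeas : MeasurableSet I := hIopen.measurableSet
  have hIsub : ∀ a ∈ I, ∀ b ∈ I, Set.uIcc a b ⊆ I := by
    intro a ha b hb t ht
    rw [Set.mem_uIcc] at ht
    constructor
    · rcases ht with ⟨h1, _⟩ | ⟨h1, _⟩
      · exact lt_of_lt_of_le ha.1 (EReal.coe_le_coe_iff.mpr h1)
      · exact lt_of_lt_of_le hb.1 (EReal.coe_le_coe_iff.mpr h1)
    · rcases ht with ⟨_, h2⟩ | ⟨_, h2⟩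
      · exact lt_of_le_of_lt (EReal.coe_le_coe_iff.mpr h2) hb.2
      · exact lt_of_le_of_lt (EReal.coe_le_coe_iff.mpr h2) ha.2
  have hφcont : ∀ x ∈ I, ContinuousAt φ x := by
    intro x hx
    exact (hf_cont.continuousAt (hIopen.mem_nhds hx)).rpow_const
      (Or.inl (ne_of_gt (hf_pos x hx)))
  have hφpos : ∀ x ∈ I, 0 < φ x := fun x hx => Real.rpow_pos_of_pos (hf_pos x hx) _
  have hφmeas : Measurable φ := hf_meas.pow measurable_const
  have hφci : ∀ a ∈ I, ∀ b ∈ I, IntervalIntegrable φ volume a b := by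
    intro a ha b hb
    exact ContinuousOn.intervalIntegrable
      (fun t ht => (hφcont t (hIsub a ha b hb ht)).continuousWithinAt)
  -- interval integrability of φ from the base point
  have Hint : ∀ x ∈ I, IntervalIntegrable φ volume x₀ x := by
    by_contra hcon
    push_neg at hcon
    obtain ⟨z, hz, hnz⟩ := hcon
    have hYzero : ∀ y ∈ I, Y y = 0 := by
      intro y hy
      rw [hY y]
      apply intervalIntegral.integral_undef
      intro hyint
      exact hnz (hyint.trans (hφci y hy z hz))
    have huzero : ∀ x ∈ I, u x = 0 := by
      intro x hx
      rw [hu x hx]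
      apply setIntegral_eq_zero_of_forall_eq_zero
      intro r hr
      have hrI : r ∈ I := ⟨lt_trans hx.1 hr.1, hr.2⟩
      rw [hYzero r hrI, mul_zero, abs_zero, Real.zero_rpow he, zero_mul]
    obtain ⟨x1, hx1, hx1'⟩ := EReal.exists_between_coe_real hif
    have hx1I : x1 ∈ I := ⟨hx1, hx1'⟩
    obtain ⟨ε, hε, hball⟩ := Metric.isOpen_iff.mp hIopen x1 hx1I
    have hx2I : x1 + ε / 2 ∈ I := by
      apply hball
      rw [Metric.mem_ball, Real.dist_eq]
      have h2 : x1 + ε / 2 - x1 = ε / 2 := by ring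
      rw [h2, abs_of_pos (half_pos hε)]
      linarith
    have := hu_anti hx1I hx2I (by linarith)
    rw [huzero _ hx1I, huzero _ hx2I] at this
    exact lt_irrefl 0 this
  have hYd : ∀ x ∈ I, HasDerivAt Y (φ x) x := by
    intro x hx
    have hYfun : Y = fun y => ∫ t in x₀..y, φ t := funext hY
    rw [hYfun]
    exact intervalIntegral.integral_hasDerivAt_right (Hint x hx)
      (hφmeas.stronglyMeasurable.stronglyMeasurableAtFilter) (hφcont x hx)
  have hYpos : ∀ x ∈ I, x₀ < x → 0 < Y x := by
    intro x hx h
    rw [hY x]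
    apply intervalIntegral.intervalIntegral_pos_of_pos_on (Hint x hx) _ h
    intro t ht
    exact hφpos t ⟨lt_of_le_of_lt hx₀l (EReal.coe_lt_coe_iff.mpr ht.1),
      lt_trans (EReal.coe_lt_coe_iff.mpr ht.2) hx.2⟩
  have hYneg : ∀ x ∈ I, x < x₀ → Y x < 0 := by
    intro x hx h
    rw [hY x, intervalIntegral.integral_symm x x₀]
    have hpos : 0 < ∫ t in x..x₀, φ t := by
      apply intervalIntegral.intervalIntegral_pos_of_pos_on ((Hint x hx).symm) _ h
      intro t ht
      exact hφpos t ⟨lt_trans hx.1 (EReal.coe_lt_coe_iff.mpr ht.1),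
        lt_of_lt_of_le (EReal.coe_lt_coe_iff.mpr ht.2) hx₀r⟩
    linarith
  have hYne : ∀ x ∈ I, x ≠ x₀ → c * Y x ≠ 0 := by
    intro x hx hne
    rcases lt_or_gt_of_ne hne with h | h
    · exact mul_ne_zero hc (ne_of_lt (hYneg x hx h))
    · exact mul_ne_zero hc (ne_of_gt (hYpos x hx h))
  have hw_nonneg : ∀ r, 0 ≤ w r :=
    fun r => mul_nonneg (Real.rpow_nonneg (abs_nonneg _) _) (hf_nonneg r)
  have hwc : ∀ x ∈ I, x ≠ x₀ → ContinuousAt w x := by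
    intro x hx hne
    have h1 : ContinuousAt (fun r => |c * Y r| ^ e) x := by
      have h0 : ContinuousAt (fun r => |c * Y r|) x :=
        (continuousAt_const.mul (hYd x hx).continuousAt).abs
      exact h0.rpow_const (Or.inl (abs_ne_zero.mpr (hYne x hx hne)))
    exact h1.mul (hf_cont.continuousAt (hIopen.mem_nhds hx))
  have hwmeas_nhds : ∀ x ∈ I, x ≠ x₀ → StronglyMeasurableAtFilter w (𝓝 x) := by
    intro x hx hne
    refine ⟨I \ {x₀}, (hIopen.sdiff isClosed_singleton).mem_nhds ⟨hx, by simpa using hne⟩, ?_⟩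
    exact (continuousOn_of_forall_continuousAt
      (fun y hy => hwc y hy.1 (by simpa using hy.2))).aestronglyMeasurable
      (hImeas.diff (measurableSet_singleton x₀))
  have hudiff : ∀ a ∈ I, ∀ b ∈ I, a ≤ b → u a = (∫ r in Set.Ioc a b, w r) + u b := by
    intro a ha b hb hab
    rw [hu a ha, hu b hb]
    have hsplit : intIoo (a : EReal) xf = Set.Ioc a b ∪ intIoo (b : EReal) xf := by
      ext r
      simp only [intIoo, Set.mem_setOf_eq, Set.mem_union, Set.mem_Ioc]
      constructor
      · rintro ⟨h1, h2⟩
        rcases le_or_gt r b with h3 | h3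
        · exact Or.inl ⟨EReal.coe_lt_coe_iff.mp h1, h3⟩
        · exact Or.inr ⟨EReal.coe_lt_coe_iff.mpr h3, h2⟩
      · rintro (⟨h1, h2⟩ | ⟨h1, h2⟩)
        · exact ⟨EReal.coe_lt_coe_iff.mpr h1, lt_of_le_of_lt (EReal.coe_le_coe_iff.mpr h2) hb.2⟩
        · exact ⟨lt_of_le_of_lt (EReal.coe_le_coe_iff.mpr hab) h1, h2⟩
    rw [hsplit, setIntegral_union ?disj ?meas ?i1 ?i2]
    case disj =>
      rw [Set.disjoint_left]
      intro r hr hr2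
      exact absurd (EReal.coe_lt_coe_iff.mp hr2.1) (not_lt.mpr hr.2)
    case meas => exact (intIoo_isOpen _ _).measurableSet
    case i1 =>
      apply (hu_fin a ha).mono_set
      intro r hr
      exact ⟨EReal.coe_lt_coe_iff.mpr hr.1, lt_of_le_of_lt (EReal.coe_le_coe_iff.mpr hr.2) hb.2⟩
    case i2 => exact hu_fin b hb
  have hu_eq : ∀ x' ∈ I, ∀ y ∈ I, u y = u x' - ∫ t in x'..y, w t := by
    intro x' hx' y hy
    rcases le_total x' y with h | h
    · rw [intervalIntegral.integral_of_le h]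
      have := hudiff x' hx' y hy h
      linarith
    · rw [intervalIntegral.integral_of_ge h]
      have := hudiff y hy x' hx' h
      linarith
  have hud : ∀ x ∈ I, x ≠ x₀ → HasDerivAt u (-w x) x := by
    intro x hx hne
    have h1 : HasDerivAt (fun y => ∫ t in x..y, w t) (w x) x :=
      intervalIntegral.integral_hasDerivAt_right IntervalIntegrable.refl
        (hwmeas_nhds x hx hne) (hwc x hx hne)
    have h2 : HasDerivAt (fun y => u x - ∫ t in x..y, w t) (-w x) x := h1.const_sub (u x)
    refine h2.congr_of_eventuallyEq ?_
    filter_upwards [hIopen.mem_nhds hx] with y hy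
    exact hu_eq x hx y hy
  set S : Set ℝ := I \ {x₀} with hSdef
  have hSmeas : MeasurableSet S := hImeas.diff (measurableSet_singleton x₀)
  have hsub : ∫ v in u '' S, g v ^ lam = ∫ x in S, |(-w x)| • (g (u x) ^ lam) :=
    integral_image_eq_integral_abs_deriv_smul hSmeas
      (fun x hx => (hud x hx.1 (by simpa using hx.2)).hasDerivWithinAt)
      (hu_anti.injOn.mono Set.diff_subset) _
  have hintegrand : ∀ x ∈ S, |(-w x)| • (g (u x) ^ lam) = |c| ^ E * (|Y x| ^ E * f x) := by
    intro x hx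
    obtain ⟨hxI, hxne0⟩ := hx
    have hxne : x ≠ x₀ := by simpa using hxne0
    have hD : 0 < |c * Y x| := abs_pos.mpr (hYne x hxI hxne)
    rw [smul_eq_mul, abs_neg, abs_of_nonneg (hw_nonneg x), hg x hxI,
      ← Real.rpow_mul (abs_nonneg _)]
    have hw' : w x = |c * Y x| ^ e * f x := rfl
    rw [hw']
    have hre : |c * Y x| ^ e * f x * |c * Y x| ^ (β / (2 * β - α) * lam)
        = (|c * Y x| ^ e * |c * Y x| ^ (β / (2 * β - α) * lam)) * f x := by ring
    rw [hre, ← Real.rpow_add hD]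
    have hexp : e + β / (2 * β - α) * lam = E := by
      rw [hedef, hEdef]
      field_simp
      rw [show α - β * 2 = -(β * 2 - α) by ring, div_neg]
      ring
    rw [hexp, abs_mul, Real.mul_rpow (abs_nonneg c) (abs_nonneg (Y x))]
    ring
  have hSint : ∫ x in S, |(-w x)| • (g (u x) ^ lam) = |c| ^ E * ∫ x in S, |Y x| ^ E * f x := by
    rw [setIntegral_congr_fun hSmeas hintegrand]
    exact integral_const_mul _ _
  have hSI_ae : S =ᵐ[volume] I := by
    rw [ae_eq_set]
    constructor
    · rw [Set.diff_eq_empty.mpr Set.diff_subset]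
      exact measure_empty
    · refine measure_mono_null (fun x hx => ?_) (measure_singleton x₀)
      rcases hx with ⟨hx1, hx2⟩
      by_contra hne
      exact hx2 ⟨hx1, by simpa using hne⟩
  have hS_to_I : ∫ x in S, |Y x| ^ E * f x = ∫ x in I, |Y x| ^ E * f x :=
    setIntegral_congr_set hSI_ae
  have hlam0 : lam ≠ 0 := by
    intro h
    rw [h] at hfin2
    simp only [Real.rpow_zero] at hfin2
    rcases (integrable_const_iff (c := (1 : ℝ))).mp hfin2 with h1 | h1
    · exact one_ne_zero h1
    · have h2 := @measure_lt_top _ _ volume h1 univ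
      simp [Real.volume_univ] at h2
  have hIm : ∫ v, g v ^ lam = ∫ v in u '' I, g v ^ lam :=
    (setIntegral_eq_integral_of_forall_compl_eq_zero
      (fun v hv => by rw [hg_supp v hv]; exact Real.zero_rpow hlam0)).symm
  have hII : ∫ v in u '' I, g v ^ lam = ∫ v in u '' S, g v ^ lam := by
    apply setIntegral_congr_set
    rw [ae_eq_set]
    constructor
    · refine measure_mono_null (fun v hv => ?_) (measure_singleton (u x₀))
      rcases hv with ⟨⟨x, hxI, rfl⟩, hv2⟩
      by_cases hxx : x = x₀
      · simp [hxx]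
      · exact absurd ⟨x, ⟨hxI, by simpa using hxx⟩, rfl⟩ hv2
    · rw [Set.diff_eq_empty.mpr (Set.image_mono (f := u) Set.diff_subset)]
      exact measure_empty
  have hNA : ∫ v, g v ^ lam = |c| ^ E * ∫ x in I, |Y x| ^ E * f x := by
    rw [hIm, hII, hsub, hSint, hS_to_I]
  simp only [← hY]
  set A : ℝ := ∫ x in I, |Y x| ^ E * f x with hAdef
  have hA0 : 0 ≤ A := setIntegral_nonneg hImeas
    (fun x _ => mul_nonneg (Real.rpow_nonneg (abs_nonneg _) _) (hf_nonneg x))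
  have hglam0 : 0 ≤ ∫ v, g v ^ lam :=
    integral_nonneg (fun v => Real.rpow_nonneg (hg_nonneg v) _)
  have hKpos : (0 : ℝ) < |c| := abs_pos.mpr hc
  have hA_eq : A = |c| ^ (-E) * ∫ v, g v ^ lam := by
    rw [hNA, ← mul_assoc, ← Real.rpow_add hKpos]
    have h0 : -E + E = 0 := by ring
    rw [h0, Real.rpow_zero, one_mul]
  have key : A ^ ((1 : ℝ) / (1 - lam))
      = |c| ^ (-(β / (α - 2 * β))) * (∫ v, g v ^ lam) ^ ((1 : ℝ) / (1 - lam)) := by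
    rw [hA_eq, Real.mul_rpow (Real.rpow_nonneg (abs_nonneg c) _) hglam0,
      ← Real.rpow_mul (abs_nonneg c)]
    have hex : -E * (1 / (1 - lam)) = -(β / (α - 2 * β)) := by
      rw [hEdef]
      field_simp
      rw [show α - β * 2 = -(β * 2 - α) by ring, div_neg]
      ring
    rw [hex]
  rw [key]
  have hStamApplied := hStam g g' hg_meas hg_nonneg hg_int hg' hfin1 hfin2
  have hN0 : 0 ≤ (∫ v, g v ^ lam) ^ ((1 : ℝ) / (1 - lam)) := Real.rpow_nonneg hglam0 _
  have hF0 : 0 ≤ ∫ v, |g v ^ (q - 2) * g' v| ^ p * g v :=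
    integral_nonneg (fun v => mul_nonneg (Real.rpow_nonneg (abs_nonneg _) _) (hg_nonneg v))
  have hF0' : 0 ≤ (∫ v, |g v ^ (q - 2) * g' v| ^ p * g v) ^ ((1 : ℝ) / (p * q)) :=
    Real.rpow_nonneg hF0 _
  rw [mul_assoc, Real.mul_rpow (Real.rpow_nonneg (abs_nonneg c) _) (mul_nonneg hN0 hF0')]
  have hconst : (|c| ^ (-(β / (α - 2 * β)))) ^ θ = |β / (α - 2 * β)| ^ (β * θ / (α - 2 * β)) := by
    rw [← Real.rpow_mul (abs_nonneg c)]
    have h1 : |β / (α - 2 * β)| = |c|⁻¹ := by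
      rw [hcdef, abs_div, abs_div, inv_div]
    rw [h1, Real.inv_rpow (abs_nonneg c), ← Real.rpow_neg (abs_nonneg c)]
    congr 1
    ring
  rw [hconst]
  apply mul_le_mul_of_nonneg_left _ (Real.rpow_nonneg (abs_nonneg _) _)
  rw [mul_comm]
  exact hStamApplied
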